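/- Bratteli's characterization: a unital *-homomorphism f : ⊕_{i=1}^{k} M_{nᵢ}(ℂ) → M_p(ℂ) exists if and only if there are a p×p unitary U and natural numbers s₁,…,s_k with Σᵢ nᵢsᵢ = p such that f(A₁,…,A_k) = U ((A₁ ⊗ I_{s₁}) ⊕ … ⊕ (A_k ⊗ I_{s_k})) Uᴴ for all (A₁,…,A_k). -/

import Mathlib

open Matrix Kronecker

section Helpers

variable {k : ℕ} {n : Fin k → ℕ}

private lemma single_mul_single_same (i : Fin k) (M N : Matrix (Fin (n i)) (Fin (n i)) ℂ) :
    (Pi.single i M : ∀ i : Fin k, Matrix (Fin (n i)) (Fin (n i)) ℂ) * Pi.single i N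
      = Pi.single i (M * N) := by
  funext l
  by_cases h : l = i
  · subst h; simp
  · simp [Pi.single_apply, h]

private lemma single_mul_left (i : Fin k) (M : Matrix (Fin (n i)) (Fin (n i)) ℂ)
    (A : ∀ i : Fin k, Matrix (Fin (n i)) (Fin (n i)) ℂ) :
    (Pi.single i M) * A = Pi.single i (M * A i) := by
  funext l
  by_cases h : l = i
  · subst h; simp
  · simp [Pi.single_apply, h]

private lemma single_mul_single_ne {i j : Fin k} (h : i ≠ j)
    (M : Matrix (Fin (n i)) (Fin (n i)) ℂ) (N : Matrix (Fin (n j)) (Fin (n j)) ℂ) :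
    (Pi.single i M : ∀ i : Fin k, Matrix (Fin (n i)) (Fin (n i)) ℂ) * Pi.single j N = 0 := by
  funext l
  by_cases hi : l = i
  · subst hi; simp [Pi.single_apply, Ne.symm h, h]
  · simp [Pi.single_apply, hi]

private lemma star_single (i : Fin k) (M : Matrix (Fin (n i)) (Fin (n i)) ℂ) :
    star (Pi.single i M : ∀ i : Fin k, Matrix (Fin (n i)) (Fin (n i)) ℂ) = Pi.single i Mᴴ := by
  funext l
  by_cases h : l = i
  · subst h; simp [Matrix.star_eq_conjTranspose]
  · simp [Pi.single_apply, h]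

private lemma std_conjTranspose {m : ℕ} (a b : Fin m) :
    (Matrix.single a b (1 : ℂ))ᴴ = Matrix.single b a 1 := by
  ext x y
  simp [conjTranspose_apply, Matrix.single, and_comm]

private lemma one_eq_sum_std {m : ℕ} :
    (1 : Matrix (Fin m) (Fin m) ℂ) = ∑ a, Matrix.single a a 1 := by
  ext x y
  simp [Matrix.sum_apply, one_apply, Matrix.single, ite_and, Finset.sum_ite_eq]

private lemma single_sum {m : ℕ} (i : Fin k) (g : Fin m → Matrix (Fin (n i)) (Fin (n i)) ℂ) :
    (Pi.single i (∑ a, g a) : ∀ i : Fin k, Matrix (Fin (n i)) (Fin (n i)) ℂ)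
      = ∑ a, Pi.single i (g a) := by
  funext l
  by_cases h : l = i
  · subst h; simp
  · simp [Pi.single_apply, h]

private lemma std_sandwich {m : ℕ} (z a b z' : Fin m) (M : Matrix (Fin m) (Fin m) ℂ) :
    Matrix.single z a 1 * M * Matrix.single b z' 1 = M a b • Matrix.single z z' 1 := by
  ext x y
  simp only [Matrix.mul_apply, Matrix.single, Matrix.of_apply, Matrix.smul_apply, ite_and,
    mul_ite, ite_mul, one_mul, mul_one, mul_zero, zero_mul, Finset.sum_ite_eq,
    Finset.sum_ite_eq', Finset.mem_univ, if_true, smul_eq_mul]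
  split_ifs <;> simp

private lemma kron_one_conjTranspose {m s : ℕ} (A : Matrix (Fin m) (Fin m) ℂ) :
    (A ⊗ₖ (1 : Matrix (Fin s) (Fin s) ℂ))ᴴ = Aᴴ ⊗ₖ 1 := by
  ext ⟨a, t⟩ ⟨b, u⟩
  by_cases h : t = u
  · subst h; simp [conjTranspose_apply, one_apply]
  · simp [conjTranspose_apply, one_apply, h, Ne.symm h]

end Helpers

section Proj

private lemma proj_decomp {p : ℕ} (Q : Matrix (Fin p) (Fin p) ℂ)
    (h1 : Qᴴ = Q) (h2 : Q * Q = Q) :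
    ∃ (s : ℕ) (V : Matrix (Fin p) (Fin s) ℂ),
      Vᴴ * V = 1 ∧ V * Vᴴ = Q ∧ Q.trace = s := by
  classical
  have hQ : Q.IsHermitian := h1
  set W : Matrix (Fin p) (Fin p) ℂ := (hQ.eigenvectorUnitary : Matrix (Fin p) (Fin p) ℂ)
    with hWdef
  have hWW : Wᴴ * W = 1 := by
    rw [← Matrix.star_eq_conjTranspose]
    exact Unitary.star_mul_self_of_mem hQ.eigenvectorUnitary.2
  have hWW' : W * Wᴴ = 1 := mul_eq_one_comm.mp hWW
  set d : Fin p → ℂ := RCLike.ofReal ∘ hQ.eigenvalues with hd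
  have spec : Q = W * diagonal d * Wᴴ := by
    rw [hWdef, hd, ← Matrix.star_eq_conjTranspose]
    exact hQ.spectral_theorem
  have hDQ : diagonal d = Wᴴ * Q * W := by
    rw [spec]
    symm
    calc Wᴴ * (W * diagonal d * Wᴴ) * W = (Wᴴ * W) * diagonal d * (Wᴴ * W) := by
          noncomm_ring
      _ = diagonal d := by rw [hWW]; noncomm_ring
  have hDD : diagonal (fun j => d j * d j) = diagonal d := by
    rw [← Matrix.diagonal_mul_diagonal, hDQ]
    calc (Wᴴ * Q * W) * (Wᴴ * Q * W) = Wᴴ * Q * (W * Wᴴ) * Q * W := by noncomm_ring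
      _ = Wᴴ * (Q * Q) * W := by rw [hWW']; noncomm_ring
      _ = Wᴴ * Q * W := by rw [h2]
  have hd01 : ∀ j, hQ.eigenvalues j = 0 ∨ hQ.eigenvalues j = 1 := by
    intro j
    have := congrFun (congrFun hDD j) j
    rw [Matrix.diagonal_apply_eq, Matrix.diagonal_apply_eq] at this
    have hr : hQ.eigenvalues j * hQ.eigenvalues j = hQ.eigenvalues j := by
      rw [hd] at this
      simp only [Function.comp_apply, ← RCLike.ofReal_mul, RCLike.ofReal_inj] at this
      exact this
    rcases mul_eq_zero.mp (show hQ.eigenvalues j * (hQ.eigenvalues j - 1) = 0 by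
      ring_nf; linarith [hr]) with h | h
    · exact Or.inl h
    · exact Or.inr (by linarith)
  set S : Finset (Fin p) := Finset.univ.filter (fun j => hQ.eigenvalues j = 1) with hS
  refine ⟨S.card, W.submatrix id (fun t => ((S.equivFin.symm t : {x // x ∈ S}) : Fin p)),
    ?_, ?_, ?_⟩
  · have hc : Function.Injective (fun t : Fin S.card => ((S.equivFin.symm t : {x // x ∈ S}) : Fin p)) := by
      intro t u htu
      exact S.equivFin.symm.injective (Subtype.coe_injective htu)
    rw [Matrix.conjTranspose_submatrix]
    have := Matrix.submatrix_mul_equiv Wᴴ W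
      (fun t : Fin S.card => ((S.equivFin.symm t : {x // x ∈ S}) : Fin p)) (Equiv.refl (Fin p))
      (fun t : Fin S.card => ((S.equivFin.symm t : {x // x ∈ S}) : Fin p))
    simp only [Equiv.coe_refl] at this
    rw [show (Wᴴ.submatrix (fun t : Fin S.card => ((S.equivFin.symm t : {x // x ∈ S}) : Fin p)) id) *
        (W.submatrix id (fun t : Fin S.card => ((S.equivFin.symm t : {x // x ∈ S}) : Fin p)))
      = (Wᴴ * W).submatrix (fun t => ((S.equivFin.symm t : {x // x ∈ S}) : Fin p))
          (fun t => ((S.equivFin.symm t : {x // x ∈ S}) : Fin p)) from this, hWW]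
    ext t u
    simp [Matrix.one_apply, hc.eq_iff]
  · rw [Matrix.conjTranspose_submatrix]
    ext x y
    rw [spec]
    have lhs : ∑ t : Fin S.card,
        W x ((S.equivFin.symm t : {x // x ∈ S}) : Fin p) *
          star (W y ((S.equivFin.symm t : {x // x ∈ S}) : Fin p))
        = ∑ j ∈ S, W x j * star (W y j) := by
      rw [← Finset.sum_coe_sort S (fun j => W x j * star (W y j))]
      exact Equiv.sum_comp S.equivFin.symm (fun j : {x // x ∈ S} => W x j * star (W y j))
    have rhs : (W * diagonal d * Wᴴ) x y = ∑ j, W x j * d j * star (W y j) := by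
      rw [Matrix.mul_apply]
      congr 1
      funext j
      rw [Matrix.mul_diagonal, Matrix.conjTranspose_apply]
    have hsplit : (∑ j, W x j * d j * star (W y j)) = ∑ j ∈ S, W x j * star (W y j) := by
      rw [← Finset.sum_filter_add_sum_filter_not Finset.univ (fun j => hQ.eigenvalues j = 1)]
      have t1 : ∑ j ∈ Finset.univ.filter (fun j => hQ.eigenvalues j = 1),
          W x j * d j * star (W y j) = ∑ j ∈ S, W x j * star (W y j) := by
        apply Finset.sum_congr rfl
        intro j hj
        rw [Finset.mem_filter] at hj
        simp [hd, hj.2]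
      have t2 : ∑ j ∈ Finset.univ.filter (fun j => ¬ hQ.eigenvalues j = 1),
          W x j * d j * star (W y j) = 0 := by
        apply Finset.sum_eq_zero
        intro j hj
        rw [Finset.mem_filter] at hj
        have : hQ.eigenvalues j = 0 := (hd01 j).resolve_right hj.2
        simp [hd, this]
      rw [t1, t2, add_zero]
    rw [rhs, hsplit, ← lhs]
    simp [Matrix.mul_apply, Matrix.conjTranspose_apply, Matrix.submatrix_apply]
  · rw [spec]
    rw [Matrix.trace_mul_comm (W * diagonal d) Wᴴ, ← mul_assoc, hWW, one_mul,
      Matrix.trace_diagonal]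
    have : ∀ j, d j = if hQ.eigenvalues j = 1 then 1 else 0 := by
      intro j
      rcases hd01 j with h | h <;> simp [hd, h]
    rw [Finset.sum_congr rfl (fun j _ => this j), Finset.sum_boole]

end Proj

theorem bratteli_backward (k p : ℕ) (n : Fin k → ℕ)
    (f : (∀ i : Fin k, Matrix (Fin (n i)) (Fin (n i)) ℂ) →ₗ[ℂ]
          Matrix (Fin p) (Fin p) ℂ)
    (s : Fin k → ℕ) (e : (Σ i : Fin k, Fin (n i) × Fin (s i)) ≃ Fin p)
    (U : Matrix (Fin p) (Fin p) ℂ) (hU1 : Uᴴ * U = 1) (hU2 : U * Uᴴ = 1)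
    (hf : ∀ A : ∀ i : Fin k, Matrix (Fin (n i)) (Fin (n i)) ℂ,
        f A = U * ((Matrix.blockDiagonal'
            (fun i => A i ⊗ₖ (1 : Matrix (Fin (s i)) (Fin (s i)) ℂ))).submatrix
              e.symm e.symm) * Uᴴ) :
    (∀ A B, f (A * B) = f A * f B) ∧ (∀ A, f (star A) = (f A)ᴴ) ∧ f 1 = 1 := by
  set D : (∀ i : Fin k, Matrix (Fin (n i)) (Fin (n i)) ℂ) → Matrix (Fin p) (Fin p) ℂ :=
    fun A => (Matrix.blockDiagonal'
      (fun i => A i ⊗ₖ (1 : Matrix (Fin (s i)) (Fin (s i)) ℂ))).submatrix e.symm e.symm with hD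
  have hDmul : ∀ A B, D (A * B) = D A * D B := by
    intro A B
    have key : (fun i => (A * B) i ⊗ₖ (1 : Matrix (Fin (s i)) (Fin (s i)) ℂ))
        = fun i => (A i ⊗ₖ (1 : Matrix (Fin (s i)) (Fin (s i)) ℂ))
            * (B i ⊗ₖ (1 : Matrix (Fin (s i)) (Fin (s i)) ℂ)) := by
      funext i
      rw [Pi.mul_apply, ← Matrix.mul_kronecker_mul, one_mul]
    rw [hD]; simp only
    rw [key, Matrix.blockDiagonal'_mul, ← Matrix.submatrix_mul_equiv _ _ _ e.symm _]
  have hDstar : ∀ A, D (star A) = (D A)ᴴ := by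
    intro A
    have key : (fun i => (star A) i ⊗ₖ (1 : Matrix (Fin (s i)) (Fin (s i)) ℂ))
        = fun i => ((A i) ⊗ₖ (1 : Matrix (Fin (s i)) (Fin (s i)) ℂ))ᴴ := by
      funext i
      rw [Pi.star_apply, Matrix.star_eq_conjTranspose, kron_one_conjTranspose]
    rw [hD]; simp only
    rw [key, ← Matrix.blockDiagonal'_conjTranspose, ← Matrix.conjTranspose_submatrix]
  have hDone : D 1 = 1 := by
    rw [hD]
    simp only
    have : (fun i => (1 : ∀ i : Fin k, Matrix (Fin (n i)) (Fin (n i)) ℂ) i ⊗ₖ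
        (1 : Matrix (Fin (s i)) (Fin (s i)) ℂ)) = fun i =>
          (1 : Matrix (Fin (n i) × Fin (s i)) (Fin (n i) × Fin (s i)) ℂ) := by
      funext i
      rw [Pi.one_apply, Matrix.one_kronecker_one]
    rw [this,
      show (fun i : Fin k => (1 : Matrix (Fin (n i) × Fin (s i)) (Fin (n i) × Fin (s i)) ℂ)) = 1
        from rfl,
      Matrix.blockDiagonal'_one, Matrix.submatrix_one_equiv]
  have hf' : ∀ A, f A = U * D A * Uᴴ := fun A => hf A
  refine ⟨fun A B => ?_, fun A => ?_, ?_⟩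
  · rw [hf', hf', hf', hDmul]
    calc U * (D A * D B) * Uᴴ = U * D A * (Uᴴ * U) * D B * Uᴴ := by
          rw [hU1]; noncomm_ring
      _ = U * D A * Uᴴ * (U * D B * Uᴴ) := by noncomm_ring
  · rw [hf', hf', hDstar]
    simp [Matrix.conjTranspose_mul, mul_assoc]
  · rw [hf', hDone, mul_one, hU2]

theorem bratteli_forward (k p : ℕ) (n : Fin k → ℕ)
    (f : (∀ i : Fin k, Matrix (Fin (n i)) (Fin (n i)) ℂ) →ₗ[ℂ]
          Matrix (Fin p) (Fin p) ℂ)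
    (hmul : ∀ A B, f (A * B) = f A * f B) (hstar : ∀ A, f (star A) = (f A)ᴴ)
    (hone : f 1 = 1) :
    ∃ (s : Fin k → ℕ), (∑ i, n i * s i = p) ∧
        ∃ (e : (Σ i : Fin k, Fin (n i) × Fin (s i)) ≃ Fin p)
          (U : Matrix (Fin p) (Fin p) ℂ), Uᴴ * U = 1 ∧ U * Uᴴ = 1 ∧
          ∀ A : ∀ i : Fin k, Matrix (Fin (n i)) (Fin (n i)) ℂ,
            f A = U * ((Matrix.blockDiagonal'
                (fun i => A i ⊗ₖ (1 : Matrix (Fin (s i)) (Fin (s i)) ℂ))).submatrix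
                  e.symm e.symm) * Uᴴ := by
  classical
  obtain ⟨Q, hQdef⟩ : ∃ Q : Fin k → Matrix (Fin p) (Fin p) ℂ,
      Q = fun i => if h : 0 < n i then
        f (Pi.single i (Matrix.single ⟨0, h⟩ ⟨0, h⟩ 1)) else 0 := ⟨_, rfl⟩
  have hQa : ∀ (i : Fin k) (a : Fin (n i)),
      Q i = f (Pi.single i (Matrix.single (⟨0, a.pos⟩ : Fin (n i)) ⟨0, a.pos⟩ 1)) := by
    intro i a
    rw [hQdef]
    simp only
    rw [dif_pos a.pos]
  have hQherm : ∀ i, (Q i)ᴴ = Q i := by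
    intro i
    rw [hQdef]
    simp only
    split_ifs with h
    · rw [← hstar, star_single, std_conjTranspose]
    · simp
  have hQidem : ∀ i, Q i * Q i = Q i := by
    intro i
    rw [hQdef]
    simp only
    split_ifs with h
    · rw [← hmul, _root_.single_mul_single_same, Matrix.single_mul_single_same, one_mul]
    · simp
  choose s V hVV hVQ htr using fun i => proj_decomp (Q i) (hQherm i) (hQidem i)
  have htrE : ∀ (i : Fin k) (a : Fin (n i)),
      (f (Pi.single i (Matrix.single a a 1))).trace = (s i : ℂ) := by
    intro i a
    have h1 : (Pi.single i (Matrix.single a a (1:ℂ)) :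
        ∀ i : Fin k, Matrix (Fin (n i)) (Fin (n i)) ℂ)
        = Pi.single i (Matrix.single a ⟨0, a.pos⟩ 1)
            * Pi.single i (Matrix.single ⟨0, a.pos⟩ a 1) := by
      rw [_root_.single_mul_single_same, Matrix.single_mul_single_same, one_mul]
    rw [h1, hmul, Matrix.trace_mul_comm, ← hmul, _root_.single_mul_single_same,
      Matrix.single_mul_single_same, one_mul, ← hQa i a, htr i]
  have hsum : ∑ i, n i * s i = p := by
    have h2 : (1 : ∀ i : Fin k, Matrix (Fin (n i)) (Fin (n i)) ℂ)
        = ∑ i, ∑ a, Pi.single i (Matrix.single a a 1) := by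
      have h2a : ∀ i : Fin k, (Pi.single i (1 : Matrix (Fin (n i)) (Fin (n i)) ℂ) :
          ∀ i : Fin k, Matrix (Fin (n i)) (Fin (n i)) ℂ)
          = ∑ a, Pi.single i (Matrix.single a a 1) :=
        fun i => (congrArg _ one_eq_sum_std).trans (single_sum i _)
      rw [← Finset.sum_congr rfl (fun i _ => h2a i)]
      funext l
      simp [Finset.sum_apply, Pi.single_apply]
    have h3 : (p : ℂ) = ∑ i, (n i : ℂ) * s i := by
      have h4 := congrArg Matrix.trace hone
      rw [h2, map_sum] at h4
      rw [Matrix.trace_sum] at h4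
      simp only [map_sum, Matrix.trace_sum] at h4
      rw [Finset.sum_congr rfl (fun i _ => Finset.sum_congr rfl (fun a _ => htrE i a))] at h4
      simp only [Matrix.trace_one, Fintype.card_fin] at h4
      rw [← h4]
      simp [Finset.sum_const, mul_comm]
    have : ((∑ i, n i * s i : ℕ) : ℂ) = (p : ℂ) := by
      push_cast
      rw [h3]
    exact_mod_cast this
  have hcard : Fintype.card (Σ i : Fin k, Fin (n i) × Fin (s i)) = p := by
    simp [Fintype.card_sigma, hsum]
  have e : (Σ i : Fin k, Fin (n i) × Fin (s i)) ≃ Fin p := Fintype.equivFinOfCardEq hcard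
  obtain ⟨W, hWdef⟩ : ∃ W : Matrix (Fin p) (Σ i : Fin k, Fin (n i) × Fin (s i)) ℂ,
      W = Matrix.of (fun x c =>
        (f (Pi.single c.1 (Matrix.single c.2.1 ⟨0, c.2.1.pos⟩ 1)) * V c.1) x c.2.2) := ⟨_, rfl⟩
  have hentry : ∀ (X : Matrix (Fin p) (Fin p) ℂ)
      (c d : Σ i : Fin k, Fin (n i) × Fin (s i)),
      (Wᴴ * X * W) c d
        = ((f (Pi.single c.1 (Matrix.single c.2.1 ⟨0, c.2.1.pos⟩ 1)) * V c.1)ᴴ * X *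
            (f (Pi.single d.1 (Matrix.single d.2.1 ⟨0, d.2.1.pos⟩ 1)) * V d.1)) c.2.2 d.2.2 := by
    intro X c d
    rw [hWdef]
    simp only [Matrix.mul_apply, Matrix.conjTranspose_apply, Matrix.of_apply]
  have hconj : ∀ (i : Fin k) (a : Fin (n i)) (z : Fin (n i)),
      (f (Pi.single i (Matrix.single a z 1)))ᴴ = f (Pi.single i (Matrix.single z a 1)) := by
    intro i a z
    rw [← hstar, star_single, std_conjTranspose]
  have claim2 : ∀ A : ∀ i : Fin k, Matrix (Fin (n i)) (Fin (n i)) ℂ,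
      Wᴴ * f A * W = Matrix.blockDiagonal'
        (fun i => A i ⊗ₖ (1 : Matrix (Fin (s i)) (Fin (s i)) ℂ)) := by
    intro A
    ext c d
    rw [hentry (f A) c d]
    rcases c with ⟨i, a, t⟩
    rcases d with ⟨j, b, u⟩
    simp only
    by_cases hij : i = j
    · subst hij
      have hmidA : f (Pi.single i (Matrix.single (⟨0, a.pos⟩ : Fin (n i)) a 1)) * f A *
          f (Pi.single i (Matrix.single b (⟨0, b.pos⟩ : Fin (n i)) 1))
          = A i a b • Q i := by
        rw [← hmul, ← hmul, single_mul_left, _root_.single_mul_single_same,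
          std_sandwich, Pi.single_smul, LinearMap.map_smul, ← hQa i a]
      have hM : (f (Pi.single i (Matrix.single a (⟨0, a.pos⟩ : Fin (n i)) 1)) * V i)ᴴ * f A *
          (f (Pi.single i (Matrix.single b (⟨0, b.pos⟩ : Fin (n i)) 1)) * V i)
          = A i a b • (1 : Matrix (Fin (s i)) (Fin (s i)) ℂ) := by
        rw [Matrix.conjTranspose_mul, hconj]
        have hassoc : (V i)ᴴ * f (Pi.single i (Matrix.single (⟨0, a.pos⟩ : Fin (n i)) a 1)) *
            f A * (f (Pi.single i (Matrix.single b (⟨0, b.pos⟩ : Fin (n i)) 1)) * V i)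
            = (V i)ᴴ * (f (Pi.single i (Matrix.single (⟨0, a.pos⟩ : Fin (n i)) a 1)) * f A *
                f (Pi.single i (Matrix.single b (⟨0, b.pos⟩ : Fin (n i)) 1))) * V i := by
          simp only [Matrix.mul_assoc]
        rw [hassoc, hmidA, Matrix.mul_smul, Matrix.smul_mul, ← hVQ i]
        congr 1
        calc (V i)ᴴ * (V i * (V i)ᴴ) * V i = ((V i)ᴴ * V i) * ((V i)ᴴ * V i) := by
              simp only [Matrix.mul_assoc]
          _ = 1 := by rw [hVV i, one_mul]
      rw [hM, Matrix.blockDiagonal'_apply_eq]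
      by_cases htu : t = u
      · subst htu; simp [Matrix.one_apply]
      · simp [Matrix.one_apply, htu]
    · have hmid0 : f (Pi.single i (Matrix.single (⟨0, a.pos⟩ : Fin (n i)) a 1)) * f A *
          f (Pi.single j (Matrix.single b (⟨0, b.pos⟩ : Fin (n j)) 1)) = 0 := by
        rw [← hmul, ← hmul, single_mul_left, single_mul_single_ne hij, map_zero]
      have hM0 : (f (Pi.single i (Matrix.single a (⟨0, a.pos⟩ : Fin (n i)) 1)) * V i)ᴴ * f A *
          (f (Pi.single j (Matrix.single b (⟨0, b.pos⟩ : Fin (n j)) 1)) * V j) = 0 := by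
        rw [Matrix.conjTranspose_mul, hconj]
        have hassoc : (V i)ᴴ * f (Pi.single i (Matrix.single (⟨0, a.pos⟩ : Fin (n i)) a 1)) *
            f A * (f (Pi.single j (Matrix.single b (⟨0, b.pos⟩ : Fin (n j)) 1)) * V j)
            = (V i)ᴴ * (f (Pi.single i (Matrix.single (⟨0, a.pos⟩ : Fin (n i)) a 1)) * f A *
                f (Pi.single j (Matrix.single b (⟨0, b.pos⟩ : Fin (n j)) 1))) * V j := by
          simp only [Matrix.mul_assoc]
        rw [hassoc, hmid0, Matrix.mul_zero, Matrix.zero_mul]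
      rw [hM0, Matrix.blockDiagonal'_apply_ne _ _ _ hij]
      simp
  have claim1 : Wᴴ * W = 1 := by
    have h5 : Wᴴ * W = Wᴴ * f 1 * W := by rw [hone, Matrix.mul_one]
    rw [h5, claim2 1]
    have h6 : (fun i => (1 : ∀ i : Fin k, Matrix (Fin (n i)) (Fin (n i)) ℂ) i ⊗ₖ
        (1 : Matrix (Fin (s i)) (Fin (s i)) ℂ)) = fun i =>
          (1 : Matrix (Fin (n i) × Fin (s i)) (Fin (n i) × Fin (s i)) ℂ) := by
      funext i
      rw [Pi.one_apply, Matrix.one_kronecker_one]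
    rw [h6,
      show (fun i : Fin k => (1 : Matrix (Fin (n i) × Fin (s i)) (Fin (n i) × Fin (s i)) ℂ)) = 1
        from rfl,
      Matrix.blockDiagonal'_one]
  refine ⟨s, hsum, e, W.submatrix id ⇑e.symm, ?_, ?_, ?_⟩
  case refine_1 =>
    rw [Matrix.conjTranspose_submatrix]
    have h7 := Matrix.submatrix_mul_equiv Wᴴ W (⇑e.symm) (Equiv.refl (Fin p)) (⇑e.symm)
    simp only [Equiv.coe_refl] at h7
    rw [show Wᴴ.submatrix (⇑e.symm) id * W.submatrix id (⇑e.symm)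
        = (Wᴴ * W).submatrix (⇑e.symm) (⇑e.symm) from h7, claim1,
      Matrix.submatrix_one_equiv]
  case refine_2 =>
    apply mul_eq_one_comm.mp
    rw [Matrix.conjTranspose_submatrix]
    have h7 := Matrix.submatrix_mul_equiv Wᴴ W (⇑e.symm) (Equiv.refl (Fin p)) (⇑e.symm)
    simp only [Equiv.coe_refl] at h7
    rw [show Wᴴ.submatrix (⇑e.symm) id * W.submatrix id (⇑e.symm)
        = (Wᴴ * W).submatrix (⇑e.symm) (⇑e.symm) from h7, claim1,
      Matrix.submatrix_one_equiv]
  case refine_3 =>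
    intro A
    have hWWop : W * Wᴴ = 1 := by
      have h8 := Matrix.submatrix_mul_equiv W Wᴴ id e.symm id
      have h9 : W.submatrix id ⇑e.symm * Wᴴ.submatrix (⇑e.symm) id = 1 := by
        have h7 := Matrix.submatrix_mul_equiv Wᴴ W (⇑e.symm) (Equiv.refl (Fin p)) (⇑e.symm)
        simp only [Equiv.coe_refl] at h7
        apply mul_eq_one_comm.mp
        rw [show Wᴴ.submatrix (⇑e.symm) id * W.submatrix id (⇑e.symm)
            = (Wᴴ * W).submatrix (⇑e.symm) (⇑e.symm) from h7, claim1,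
          Matrix.submatrix_one_equiv]
      rw [← Matrix.submatrix_id_id (W * Wᴴ), ← h8, h9]
    rw [← claim2 A, Matrix.conjTranspose_submatrix,
      Matrix.submatrix_mul_equiv W (Wᴴ * f A * W) id e.symm (⇑e.symm),
      Matrix.submatrix_mul_equiv (W * (Wᴴ * f A * W)) Wᴴ id e.symm id,
      Matrix.submatrix_id_id]
    calc f A = (W * Wᴴ) * f A * (W * Wᴴ) := by
          rw [hWWop, Matrix.one_mul, Matrix.mul_one]
      _ = W * (Wᴴ * f A * W) * Wᴴ := by simp only [Matrix.mul_assoc]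

theorem bratteli_characterization (k p : ℕ) (n : Fin k → ℕ)
    (f : (∀ i : Fin k, Matrix (Fin (n i)) (Fin (n i)) ℂ) →ₗ[ℂ]
          Matrix (Fin p) (Fin p) ℂ) :
    ((∀ A B, f (A * B) = f A * f B) ∧ (∀ A, f (star A) = (f A)ᴴ) ∧ f 1 = 1)
      ↔ ∃ (s : Fin k → ℕ), (∑ i, n i * s i = p) ∧
          ∃ (e : (Σ i : Fin k, Fin (n i) × Fin (s i)) ≃ Fin p)
            (U : Matrix (Fin p) (Fin p) ℂ), Uᴴ * U = 1 ∧ U * Uᴴ = 1 ∧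
            ∀ A : ∀ i : Fin k, Matrix (Fin (n i)) (Fin (n i)) ℂ,
              f A = U * ((Matrix.blockDiagonal'
                  (fun i => A i ⊗ₖ (1 : Matrix (Fin (s i)) (Fin (s i)) ℂ))).submatrix
                    e.symm e.symm) * Uᴴ := by
  constructor
  · rintro ⟨hmul, hstar, hone⟩
    exact bratteli_forward k p n f hmul hstar hone
  · rintro ⟨s, hs, e, U, hU1, hU2, hf⟩
    exact bratteli_backward k p n f s e U hU1 hU2 hf
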